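/- Let f : (0,∞) × S² → ℝ be a smooth function with compact support (where S² is the unit sphere in ℝ³). Then for every θ > 0, ∫_{S²} |f(θ,ξ)|² dS_ξ ≤ (2/sinh²θ) · (∫_θ^∞ ∫_{S²} |f(θ̃,ξ)|² sinh²θ̃ dS_ξ dθ̃)^{1/2} · (∫_θ^∞ ∫_{S²} |∂_θ f(θ̃,ξ)|² sinh²θ̃ dS_ξ dθ̃)^{1/2}, where dS_ξ is the surface measure on the unit sphere S². -/

import Mathlib

open MeasureTheory Real Set
open scoped ContDiff

noncomputable section

/-- Euclidean space ℝ³. -/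
abbrev Spc : Type := EuclideanSpace ℝ (Fin 3)

/-- Space-time [0,∞) × ℝ³ (modelled inside ℝ × ℝ³). -/
abbrev SpaceTime : Type := ℝ × Spc

/-- Time derivative ∂_t. -/
def dt (u : SpaceTime → ℝ) : SpaceTime → ℝ := fun p => fderiv ℝ u p (1, 0)

/-- Spatial derivative ∂_i. -/
def dx (i : Fin 3) (u : SpaceTime → ℝ) : SpaceTime → ℝ :=
  fun p => fderiv ℝ u p (0, EuclideanSpace.single i 1)

/-- ∂_a for a = 0,…,3, with the convention ∂₀ = −∂_t. -/
def pd (a : Fin 4) (u : SpaceTime → ℝ) : SpaceTime → ℝ :=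
  if a.val = 0 then (fun p => - dt u p) else dx ⟨a.val - 1, by have := a.isLt; omega⟩ u

/-- ∂_a for a = 0,…,3, with the convention that index 0 is ∂_t. -/
def pD (a : Fin 4) (u : SpaceTime → ℝ) : SpaceTime → ℝ :=
  if a.val = 0 then dt u else dx ⟨a.val - 1, by have := a.isLt; omega⟩ u

/-- Coordinate functions, x₀ = t. -/
def coord (a : Fin 4) (p : SpaceTime) : ℝ :=
  if a.val = 0 then p.1 else p.2 ⟨a.val - 1, by have := a.isLt; omega⟩

/-- Ω_{ab} = x_a ∂_b − x_b ∂_a. -/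
def Omega (a b : Fin 4) (u : SpaceTime → ℝ) : SpaceTime → ℝ :=
  fun p => coord a p * pd b u p - coord b p * pd a u p

/-- The D'Alembertian □ = ∂_t² − ∂₁² − ∂₂² − ∂₃². -/
def dAlem (u : SpaceTime → ℝ) : SpaceTime → ℝ :=
  fun p => dt (dt u) p - ∑ i : Fin 3, dx i (dx i u) p

/-- The ten Γ operators: ∂_t, ∂₁, ∂₂, ∂₃ and the six Ω_{ab}, 0 ≤ a < b ≤ 3. -/
def Gam : Fin 10 → (SpaceTime → ℝ) → (SpaceTime → ℝ) :=
  ![dt, dx 0, dx 1, dx 2, Omega 0 1, Omega 0 2, Omega 0 3, Omega 1 2, Omega 1 3, Omega 2 3]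

/-- Γ^α for a 10-index α, the Γ's being composed in a fixed ordering. -/
def GammaPow (α : Fin 10 → ℕ) (u : SpaceTime → ℝ) : SpaceTime → ℝ :=
  (List.finRange 10).foldr (fun i v => (Gam i)^[α i] v) u

/-- The (finite) set of all 10-indices of size at most N. -/
def idxLe (N : ℕ) : Finset (Fin 10 → ℕ) :=
  (Fintype.piFinset fun _ => Finset.range (N + 1)).filter fun α => ∑ i, α i ≤ N

/-- The energy ℰ(u(t,·)) = (‖u(t,·)‖² + Σ_{a=0}^3 ‖∂_a u(t,·)‖²)^{1/2}. -/
def calE (u : SpaceTime → ℝ) (t : ℝ) : ℝ :=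
  Real.sqrt (∫ x : Spc, ((u (t, x)) ^ 2 + ∑ a : Fin 4, (pd a u (t, x)) ^ 2))

/-- The generalized Sobolev norm ‖u(t,·)‖_{Γ,N}. -/
def gNorm (N : ℕ) (u : SpaceTime → ℝ) (t : ℝ) : ℝ :=
  ∑ α ∈ idxLe N, calE (GammaPow α u) t

/-- Supremum over times t ≥ 0. -/
def supT (F : ℝ → ℝ) : ℝ := ⨆ t : {t : ℝ // 0 ≤ t}, F t.1

/-- The space-time norm ‖u‖_N = sup_{t ≥ 0} ‖u(t,·)‖_{Γ,N}. -/
def uNorm (N : ℕ) (u : SpaceTime → ℝ) : ℝ := supT (gNorm N u)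

/-- The weighted norm E_{k,N}(g) = sup_{t ≥ 0} (1+t)^k ‖g(t,·)‖_{Γ,N}. -/
def eNorm (k : ℝ) (N : ℕ) (g : SpaceTime → ℝ) : ℝ :=
  supT fun t => (1 + t) ^ k * gNorm N g t

/-- The L^∞-norm in the space variable. -/
def supX (u : SpaceTime → ℝ) (t : ℝ) : ℝ := ⨆ x : Spc, |u (t, x)|

/-- The norm |u(t,·)|_{Γ,N}. -/
def gSupNorm (N : ℕ) (u : SpaceTime → ℝ) (t : ℝ) : ℝ :=
  ∑ α ∈ idxLe N, (supX (GammaPow α u) t + ∑ a : Fin 4, supX (pd a (GammaPow α u)) t)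

/-- The weighted decay norm |u|_{k,N} = sup_{t ≥ 0} (1+t)^k |u(t,·)|_{Γ,N}. -/
def dNorm (k : ℝ) (N : ℕ) (u : SpaceTime → ℝ) : ℝ :=
  supT fun t => (1 + t) ^ k * gSupNorm N u t


/-- The surface measure on the unit sphere S² ⊆ ℝ³. -/
def sphereMeasure : MeasureTheory.Measure (Metric.sphere (0 : Spc) 1) :=
  (MeasureTheory.volume : MeasureTheory.Measure Spc).toSphere

end

noncomputable section HypAux

instance : IsFiniteMeasure sphereMeasure := by unfold sphereMeasure; infer_instance

def sphProd (θ : ℝ) : Measure (ℝ × Metric.sphere (0 : Spc) 1) :=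
  (volume.restrict (Set.Ioi θ)).prod sphereMeasure

instance (θ : ℝ) : IsFiniteMeasureOnCompacts (sphProd θ) := by
  unfold sphProd; infer_instance

instance (θ : ℝ) : SFinite (sphProd θ) := by
  unfold sphProd; infer_instance

lemma integrable_sphere (h : Metric.sphere (0 : Spc) 1 → ℝ) (hh : Continuous h) :
    Integrable h sphereMeasure := by
  refine hh.integrable_of_hasCompactSupport ?_
  exact IsClosed.isCompact (isClosed_tsupport _)

lemma integrable_sphProd {θ R : ℝ} (u : ℝ × Spc → ℝ) (hu : Continuous u)
    (hR : ∀ p : ℝ × Spc, R < |p.1| → u p = 0) (w : ℝ → ℝ) (hw : Continuous w) :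
    Integrable (fun p : ℝ × Metric.sphere (0 : Spc) 1 => u (p.1, (p.2 : Spc)) * w p.1)
      (sphProd θ) := by
  have hcont : Continuous fun p : ℝ × Metric.sphere (0 : Spc) 1 => u (p.1, (p.2 : Spc)) * w p.1 :=
    (hu.comp (continuous_fst.prodMk (continuous_subtype_val.comp continuous_snd))).mul
      (hw.comp continuous_fst)
  refine hcont.integrable_of_hasCompactSupport ?_
  apply HasCompactSupport.intro
    (K := (Set.Icc (-R) R) ×ˢ (Set.univ : Set (Metric.sphere (0 : Spc) 1)))
    (isCompact_Icc.prod isCompact_univ)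
  intro p hp
  have h1 : p.1 ∉ Set.Icc (-R) R := fun h => hp (Set.mk_mem_prod h (Set.mem_univ _))
  have h2 : R < |p.1| := by
    simp only [Set.mem_Icc, not_and_or, not_le] at h1
    rcases h1 with h | h
    · exact lt_abs.mpr (Or.inr (by linarith))
    · exact lt_abs.mpr (Or.inl h)
  rw [hR (p.1, (p.2 : Spc)) h2, zero_mul]

lemma pt_ineq (a b s s₁ : ℝ) (hs : 0 < s) (h : s ≤ s₁) :
    -(2 * a * b) ≤ 2 / s ^ 2 * (|a| * s₁ * (|b| * s₁)) := by
  have hs2 : (0:ℝ) < s ^ 2 := by positivity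
  rw [div_mul_eq_mul_div, le_div_iff₀ hs2]
  have h3 : -(a * b) ≤ |a| * |b| := by
    rw [← abs_mul]; exact neg_le_abs _
  have h4 : s ^ 2 ≤ s₁ ^ 2 := by nlinarith
  have h5 : (0:ℝ) ≤ |a| * |b| := by positivity
  nlinarith [mul_le_mul_of_nonneg_right h3 hs2.le, mul_le_mul_of_nonneg_left h4 h5]

end HypAux

/-- the key integral inequality on the unit hyperboloid: for f smooth with
compact support, ∫_{S²} f(θ,ξ)² dS_ξ ≤ (2/sinh²θ) ‖f‖_{L²} ‖∂_θ f‖_{L²}, the L² norms being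
taken with respect to the measure sinh²θ̃ dθ̃ dS_ξ on [θ,∞) × S². -/


theorem hyperboloid_integral_inequality (f : ℝ × Spc → ℝ)
    (hf : ContDiff ℝ ∞ f) (hfc : HasCompactSupport f)
    (θ : ℝ) (hθ : 0 < θ) :
    (∫ ξ : Metric.sphere (0 : Spc) 1, (f (θ, (ξ : Spc))) ^ 2 ∂sphereMeasure)
      ≤ (2 / Real.sinh θ ^ 2) *
        Real.sqrt (∫ θ' in Set.Ioi θ, ∫ ξ : Metric.sphere (0 : Spc) 1,
            (f (θ', (ξ : Spc))) ^ 2 * Real.sinh θ' ^ 2 ∂sphereMeasure) *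
        Real.sqrt (∫ θ' in Set.Ioi θ, ∫ ξ : Metric.sphere (0 : Spc) 1,
            (dt f (θ', (ξ : Spc))) ^ 2 * Real.sinh θ' ^ 2 ∂sphereMeasure) := by
  have h1le : (1 : WithTop ℕ∞) ≤ ∞ := by exact_mod_cast le_top
  have hfcont : Continuous f := hf.continuous
  have hdtcont : Continuous (dt f) := by
    have : Continuous (fderiv ℝ f) := hf.continuous_fderiv (by simp)
    exact (ContinuousLinearMap.apply ℝ ℝ ((1 : ℝ), (0 : Spc))).continuous.comp this
  -- bounds
  obtain ⟨C₁, hC₁⟩ := hfcont.bounded_above_of_compact_support hfc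
  have hdtsupp : ∀ p : ℝ × Spc, p ∉ tsupport f → dt f p = 0 := by
    intro p hp
    have : fderiv ℝ f p = 0 := by
      by_contra h
      exact hp (support_fderiv_subset ℝ (f := f) h)
    simp [dt, this]
  have hdtc : HasCompactSupport (dt f) := by
    apply HasCompactSupport.intro hfc
    intro p hp; exact hdtsupp p hp
  obtain ⟨C₂, hC₂⟩ := hdtcont.bounded_above_of_compact_support hdtc
  set C : ℝ := max C₁ C₂ with hC
  have hCf : ∀ p, |f p| ≤ C := fun p => (hC₁ p).trans (le_max_left _ _)
  have hCd : ∀ p, |dt f p| ≤ C := fun p => (hC₂ p).trans (le_max_right _ _)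
  have hC0 : 0 ≤ C := le_trans (abs_nonneg _) (hCf (0, 0))
  -- support radius
  obtain ⟨R₀, hR₀⟩ := hfc.isBounded.subset_closedBall 0
  set R : ℝ := max R₀ 0 with hRdef
  have hRf : ∀ p : ℝ × Spc, R < |p.1| → f p = 0 := by
    intro p hp
    apply image_eq_zero_of_notMem_tsupport
    intro hmem
    have := hR₀ hmem
    simp only [Metric.mem_closedBall, dist_zero_right] at this
    have h2 : |p.1| ≤ ‖p‖ := norm_fst_le p
    have : |p.1| ≤ R₀ := le_trans h2 this
    have : |p.1| ≤ R := this.trans (le_max_left _ _)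
    linarith
  have hRd : ∀ p : ℝ × Spc, R < |p.1| → dt f p = 0 := by
    intro p hp
    apply hdtsupp
    intro hmem
    have := hR₀ hmem
    simp only [Metric.mem_closedBall, dist_zero_right] at this
    have h2 : |p.1| ≤ ‖p‖ := norm_fst_le p
    have : |p.1| ≤ R := (le_trans h2 this).trans (le_max_left _ _)
    linarith
  have hR0 : 0 ≤ R := le_max_right _ _
  -- pointwise derivative in t
  have hder : ∀ (x : ℝ) (ξ : Metric.sphere (0 : Spc) 1),
      HasDerivAt (fun t => f (t, (ξ : Spc))) (dt f (x, (ξ : Spc))) x := by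
    intro x ξ
    have hfd := (hf.differentiable (by simp) (x, (ξ : Spc))).hasFDerivAt
    have hc : HasDerivAt (fun t : ℝ => (t, (ξ : Spc))) ((1 : ℝ), (0 : Spc)) x :=
      (hasDerivAt_id x).prodMk (hasDerivAt_const x _)
    exact hfd.comp_hasDerivAt x hc
  have hder2 : ∀ (x : ℝ) (ξ : Metric.sphere (0 : Spc) 1),
      HasDerivAt (fun t => f (t, (ξ : Spc)) ^ 2)
        (2 * f (x, (ξ : Spc)) * dt f (x, (ξ : Spc))) x := by
    intro x ξ
    have : HasDerivAt (fun t => f (t, (ξ : Spc)) ^ 2)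
        (((2:ℕ):ℝ) * f (x, (ξ : Spc)) ^ (2 - 1) * dt f (x, (ξ : Spc))) x :=
      (hder x ξ).fun_pow 2
    convert this using 1
    push_cast
    ring
  -- g and g'
  set g : ℝ → ℝ := fun t => ∫ ξ : Metric.sphere (0 : Spc) 1, f (t, (ξ : Spc)) ^ 2 ∂sphereMeasure
    with hgdef
  set g' : ℝ → ℝ := fun t => ∫ ξ : Metric.sphere (0 : Spc) 1,
      2 * f (t, (ξ : Spc)) * dt f (t, (ξ : Spc)) ∂sphereMeasure with hg'def
  have hmeas : ∀ x : ℝ, AEStronglyMeasurable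
      (fun ξ : Metric.sphere (0 : Spc) 1 => f (x, (ξ : Spc)) ^ 2) sphereMeasure := by
    intro x
    exact ((hfcont.comp (Continuous.prodMk_right x) |>.comp continuous_subtype_val).pow 2
      ).aestronglyMeasurable
  have hmeas' : ∀ x : ℝ, AEStronglyMeasurable
      (fun ξ : Metric.sphere (0 : Spc) 1 =>
        2 * f (x, (ξ : Spc)) * dt f (x, (ξ : Spc))) sphereMeasure := by
    intro x
    apply Continuous.aestronglyMeasurable
    have h1 : Continuous fun ξ : Metric.sphere (0 : Spc) 1 => f (x, (ξ : Spc)) :=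
      hfcont.comp ((Continuous.prodMk_right x).comp continuous_subtype_val)
    have h2 : Continuous fun ξ : Metric.sphere (0 : Spc) 1 => dt f (x, (ξ : Spc)) :=
      hdtcont.comp ((Continuous.prodMk_right x).comp continuous_subtype_val)
    exact (continuous_const.mul h1).mul h2
  have hgderiv : ∀ x : ℝ, HasDerivAt g (g' x) x := by
    intro x₀
    have := hasDerivAt_integral_of_dominated_loc_of_deriv_le (μ := sphereMeasure)
      (F := fun t (ξ : Metric.sphere (0 : Spc) 1) => f (t, (ξ : Spc)) ^ 2)
      (F' := fun t (ξ : Metric.sphere (0 : Spc) 1) =>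
        2 * f (t, (ξ : Spc)) * dt f (t, (ξ : Spc)))
      (x₀ := x₀) (bound := fun _ => 2 * C * C)
      (Metric.ball_mem_nhds x₀ one_pos) (Filter.Eventually.of_forall hmeas) ?_ (hmeas' x₀) ?_ ?_ ?_
    · exact this.2
    · apply integrable_sphere
      exact (hfcont.comp ((Continuous.prodMk_right x₀).comp continuous_subtype_val)).pow 2
    · refine Filter.Eventually.of_forall fun ξ => fun x _ => ?_
      have ha := hCf (x, (ξ : Spc))
      have hb := hCd (x, (ξ : Spc))
      have h1 : ‖2 * f (x, (ξ : Spc)) * dt f (x, (ξ : Spc))‖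
          = 2 * |f (x, (ξ : Spc))| * |dt f (x, (ξ : Spc))| := by
        rw [norm_mul, norm_mul]
        simp [abs_of_nonneg, mul_assoc]
      rw [h1]
      show 2 * |f (x, (ξ : Spc))| * |dt f (x, (ξ : Spc))| ≤ 2 * C * C
      have hc := abs_nonneg (f (x, (ξ : Spc)))
      have hd := abs_nonneg (dt f (x, (ξ : Spc)))
      have := mul_le_mul ha hb hd hC0
      nlinarith
    · exact integrable_const _
    · exact Filter.Eventually.of_forall fun ξ => fun x _ => hder2 x ξ
  -- continuity of g and g'
  have hgcont : Continuous g := by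
    apply continuous_of_dominated hmeas (fun x => Filter.Eventually.of_forall fun ξ => ?_)
      (integrable_const (C * C)) (Filter.Eventually.of_forall fun ξ => ?_)
    · have h1 := hCf (x, (ξ : Spc))
      have h2 := abs_nonneg (f (x, (ξ : Spc)))
      have : ‖f (x, (ξ : Spc)) ^ 2‖ = |f (x, (ξ : Spc))| ^ 2 := by
        rw [← abs_pow]; rfl
      rw [this]
      have := mul_le_mul h1 h1 h2 hC0
      nlinarith
    · exact (hfcont.comp ((continuous_id.prodMk continuous_const))).pow 2
  have hg'cont : Continuous g' := by
    apply continuous_of_dominated hmeas' (fun x => Filter.Eventually.of_forall fun ξ => ?_)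
      (integrable_const (2 * C * C)) (Filter.Eventually.of_forall fun ξ => ?_)
    · have h1 := hCf (x, (ξ : Spc))
      have h2 := hCd (x, (ξ : Spc))
      have h3 := abs_nonneg (f (x, (ξ : Spc)))
      have h4 := abs_nonneg (dt f (x, (ξ : Spc)))
      have : ‖2 * f (x, (ξ : Spc)) * dt f (x, (ξ : Spc))‖
          = 2 * |f (x, (ξ : Spc))| * |dt f (x, (ξ : Spc))| := by
        rw [norm_mul, norm_mul]
        simp [abs_of_nonneg, mul_assoc]
      rw [this]
      have := mul_le_mul h1 h2 h4 hC0
      nlinarith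
    · have h1 : Continuous fun t : ℝ => f (t, (ξ : Spc)) :=
        hfcont.comp (continuous_id.prodMk continuous_const)
      have h2 : Continuous fun t : ℝ => dt f (t, (ξ : Spc)) :=
        hdtcont.comp (continuous_id.prodMk continuous_const)
      exact (continuous_const.mul h1).mul h2
  -- g and g' vanish for large t
  have hg'zero : ∀ t : ℝ, R < |t| → g' t = 0 := by
    intro t ht
    rw [hg'def]
    have : ∀ ξ : Metric.sphere (0 : Spc) 1,
        2 * f (t, (ξ : Spc)) * dt f (t, (ξ : Spc)) = 0 := by
      intro ξ
      rw [hRf (t, (ξ : Spc)) ht]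
      ring
    simp only [this, integral_zero]
  have hgzero : ∀ t : ℝ, R < |t| → g t = 0 := by
    intro t ht
    rw [hgdef]
    have : ∀ ξ : Metric.sphere (0 : Spc) 1, f (t, (ξ : Spc)) ^ 2 = 0 := by
      intro ξ
      rw [hRf (t, (ξ : Spc)) ht]
      ring
    simp only [this, integral_zero]
  -- integrability of g' on Ioi θ
  have hg'int : IntegrableOn g' (Set.Ioi θ) := by
    apply Integrable.integrableOn
    apply hg'cont.integrable_of_hasCompactSupport
    apply HasCompactSupport.intro (isCompact_Icc (a := -R) (b := R))
    intro t ht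
    apply hg'zero
    simp only [Set.mem_Icc, not_and_or, not_le] at ht
    rcases ht with h | h
    · exact lt_abs.mpr (Or.inr (by linarith))
    · exact lt_abs.mpr (Or.inl h)
  -- tendsto
  have hgtend : Filter.Tendsto g Filter.atTop (nhds 0) := by
    apply Filter.Tendsto.congr' _ (tendsto_const_nhds (α := ℝ) (x := (0:ℝ)))
    filter_upwards [Filter.Ioi_mem_atTop R] with t ht
    exact (hgzero t (by rw [abs_of_pos (lt_of_le_of_lt hR0 ht)]; exact ht)).symm
  -- FTC
  have hftc : ∫ t in Set.Ioi θ, g' t = 0 - g θ :=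
    integral_Ioi_of_hasDerivAt_of_tendsto hgcont.continuousWithinAt
      (fun x _ => hgderiv x) hg'int hgtend
  have hgθ : g θ = ∫ t in Set.Ioi θ, -g' t := by
    rw [integral_neg]
    linarith [hftc]
  -- switch to product measure
  set s : ℝ := Real.sinh θ with hsdef
  have hs : 0 < s := Real.sinh_pos_iff.mpr hθ
  set μp : Measure (ℝ × Metric.sphere (0 : Spc) 1) := sphProd θ with hμp
  set H : ℝ × Metric.sphere (0 : Spc) 1 → ℝ :=
    fun p => -(2 * f (p.1, (p.2 : Spc)) * dt f (p.1, (p.2 : Spc))) with hHdef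
  set K : ℝ × Metric.sphere (0 : Spc) 1 → ℝ :=
    fun p => 2 / s ^ 2 * (|f (p.1, (p.2 : Spc))| * Real.sinh p.1 *
      (|dt f (p.1, (p.2 : Spc))| * Real.sinh p.1)) with hKdef
  have hHint : Integrable H μp := by
    have := integrable_sphProd (θ := θ) (R := R)
      (fun q => -(2 * f q * dt f q))
      (by exact (continuous_const.mul hfcont).mul hdtcont |>.neg)
      (fun q hq => by simp [hRf q hq]) (fun _ => 1) continuous_const
    apply this.congr
    refine Filter.Eventually.of_forall fun p => ?_
    simp [hHdef]
  have hKint : Integrable K μp := by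
    have := integrable_sphProd (θ := θ) (R := R)
      (fun q => 2 / s ^ 2 * (|f q| * |dt f q|))
      (by exact continuous_const.mul ((hfcont.abs).mul (hdtcont.abs)))
      (fun q hq => by simp [hRf q hq])
      (fun t => Real.sinh t ^ 2) (Real.continuous_sinh.pow 2)
    apply this.congr
    refine Filter.Eventually.of_forall fun p => ?_
    simp only [hKdef]
    ring
  have hgprod : g θ = ∫ p, H p ∂μp := by
    rw [hgθ]
    have : ∀ t : ℝ, -g' t = ∫ ξ : Metric.sphere (0 : Spc) 1,
        -(2 * f (t, (ξ : Spc)) * dt f (t, (ξ : Spc))) ∂sphereMeasure := by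
      intro t
      rw [hg'def, ← integral_neg]
    simp_rw [this]
    exact integral_integral (f := fun t (ξ : Metric.sphere (0 : Spc) 1) =>
      -(2 * f (t, (ξ : Spc)) * dt f (t, (ξ : Spc)))) hHint
  -- a.e. p.1 > θ
  have hae : ∀ᵐ p ∂μp, θ < p.1 := by
    rw [ae_iff]
    have hset : {p : ℝ × Metric.sphere (0 : Spc) 1 | ¬ θ < p.1}
        = (Set.Ioi θ)ᶜ ×ˢ (Set.univ : Set (Metric.sphere (0 : Spc) 1)) := by
      ext p
      simp [Set.mem_prod]
    rw [hset, hμp, sphProd, Measure.prod_prod, Measure.restrict_apply (measurableSet_Ioi.compl)]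
    simp [Set.Iic_inter_Ioi]
  have hHK : H ≤ᵐ[μp] K := by
    filter_upwards [hae] with p hp
    have hss : s ≤ Real.sinh p.1 := Real.sinh_le_sinh.mpr hp.le
    exact pt_ineq _ _ s (Real.sinh p.1) hs hss
  have hmono : g θ ≤ ∫ p, K p ∂μp := by
    rw [hgprod]
    exact integral_mono_ae hHint hKint hHK
  -- Cauchy-Schwarz
  set F1 : ℝ × Metric.sphere (0 : Spc) 1 → ℝ :=
    fun p => |f (p.1, (p.2 : Spc))| * Real.sinh p.1 with hF1def
  set F2 : ℝ × Metric.sphere (0 : Spc) 1 → ℝ :=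
    fun p => |dt f (p.1, (p.2 : Spc))| * Real.sinh p.1 with hF2def
  have hF1sq : Integrable (fun p => F1 p ^ 2) μp := by
    have := integrable_sphProd (θ := θ) (R := R)
      (fun q => f q ^ 2) (hfcont.pow 2) (fun q hq => by simp [hRf q hq])
      (fun t => Real.sinh t ^ 2) (Real.continuous_sinh.pow 2)
    apply this.congr
    refine Filter.Eventually.of_forall fun p => ?_
    simp only [hF1def, mul_pow, sq_abs]
  have hF2sq : Integrable (fun p => F2 p ^ 2) μp := by
    have := integrable_sphProd (θ := θ) (R := R)
      (fun q => dt f q ^ 2) (hdtcont.pow 2) (fun q hq => by simp [hRd q hq])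
      (fun t => Real.sinh t ^ 2) (Real.continuous_sinh.pow 2)
    apply this.congr
    refine Filter.Eventually.of_forall fun p => ?_
    simp only [hF2def, mul_pow, sq_abs]
  have hF1meas : AEStronglyMeasurable F1 μp := by
    apply Continuous.aestronglyMeasurable
    exact ((hfcont.comp (continuous_fst.prodMk
      (continuous_subtype_val.comp continuous_snd))).abs).mul
      (Real.continuous_sinh.comp continuous_fst)
  have hF2meas : AEStronglyMeasurable F2 μp := by
    apply Continuous.aestronglyMeasurable
    exact ((hdtcont.comp (continuous_fst.prodMk
      (continuous_subtype_val.comp continuous_snd))).abs).mul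
      (Real.continuous_sinh.comp continuous_fst)
  have hF1mem : MemLp F1 (ENNReal.ofReal 2) μp := by
    rw [show ENNReal.ofReal 2 = 2 by norm_num]
    exact (memLp_two_iff_integrable_sq hF1meas).mpr hF1sq
  have hF2mem : MemLp F2 (ENNReal.ofReal 2) μp := by
    rw [show ENNReal.ofReal 2 = 2 by norm_num]
    exact (memLp_two_iff_integrable_sq hF2meas).mpr hF2sq
  have hsinhnn : ∀ᵐ p ∂μp, 0 ≤ Real.sinh p.1 := by
    filter_upwards [hae] with p hp
    exact Real.sinh_nonneg_iff.mpr (hθ.le.trans hp.le)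
  have hF1nn : 0 ≤ᵐ[μp] F1 := by
    filter_upwards [hsinhnn] with p hp
    exact mul_nonneg (abs_nonneg _) hp
  have hF2nn : 0 ≤ᵐ[μp] F2 := by
    filter_upwards [hsinhnn] with p hp
    exact mul_nonneg (abs_nonneg _) hp
  have hpq : Real.HolderConjugate 2 2 := ⟨by norm_num, by norm_num, by norm_num⟩
  have hHolder := integral_mul_le_Lp_mul_Lq_of_nonneg (μ := μp) hpq hF1nn hF2nn hF1mem hF2mem
  have hKval : ∫ p, K p ∂μp = 2 / s ^ 2 * ∫ p, F1 p * F2 p ∂μp := by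
    simp only [hKdef, hF1def, hF2def]
    rw [integral_const_mul]
  have hrpow2 : ∀ h : ℝ × Metric.sphere (0 : Spc) 1 → ℝ,
      (∫ p, h p ^ (2:ℝ) ∂μp) = ∫ p, h p ^ (2:ℕ) ∂μp := by
    intro h
    refine integral_congr_ae (Filter.Eventually.of_forall fun p => ?_)
    show h p ^ (2:ℝ) = h p ^ (2:ℕ)
    rw [show (2:ℝ) = ((2:ℕ):ℝ) by norm_num, Real.rpow_natCast]
  have hA : (∫ p, F1 p ^ (2:ℝ) ∂μp)
      = ∫ θ' in Set.Ioi θ, ∫ ξ : Metric.sphere (0 : Spc) 1,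
          f (θ', (ξ : Spc)) ^ 2 * Real.sinh θ' ^ 2 ∂sphereMeasure := by
    rw [hrpow2 F1]
    have h1 : (∫ p, F1 p ^ (2:ℕ) ∂μp)
        = ∫ p : ℝ × Metric.sphere (0 : Spc) 1,
            f (p.1, (p.2 : Spc)) ^ 2 * Real.sinh p.1 ^ 2 ∂μp := by
      refine integral_congr_ae (Filter.Eventually.of_forall fun p => ?_)
      simp only [hF1def, mul_pow, sq_abs]
    rw [h1]
    exact (integral_integral (f := fun t (ξ : Metric.sphere (0 : Spc) 1) =>
      f (t, (ξ : Spc)) ^ 2 * Real.sinh t ^ 2)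
      ((hF1sq.congr (Filter.Eventually.of_forall fun p => by
        simp [Function.uncurry, hF1def, mul_pow, sq_abs])))).symm
  have hB : (∫ p, F2 p ^ (2:ℝ) ∂μp)
      = ∫ θ' in Set.Ioi θ, ∫ ξ : Metric.sphere (0 : Spc) 1,
          dt f (θ', (ξ : Spc)) ^ 2 * Real.sinh θ' ^ 2 ∂sphereMeasure := by
    rw [hrpow2 F2]
    have h1 : (∫ p, F2 p ^ (2:ℕ) ∂μp)
        = ∫ p : ℝ × Metric.sphere (0 : Spc) 1,
            dt f (p.1, (p.2 : Spc)) ^ 2 * Real.sinh p.1 ^ 2 ∂μp := by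
      refine integral_congr_ae (Filter.Eventually.of_forall fun p => ?_)
      simp only [hF2def, mul_pow, sq_abs]
    rw [h1]
    exact (integral_integral (f := fun t (ξ : Metric.sphere (0 : Spc) 1) =>
      dt f (t, (ξ : Spc)) ^ 2 * Real.sinh t ^ 2)
      ((hF2sq.congr (Filter.Eventually.of_forall fun p => by
        simp [Function.uncurry, hF2def, mul_pow, sq_abs])))).symm
  calc (∫ ξ : Metric.sphere (0 : Spc) 1, f (θ, (ξ : Spc)) ^ 2 ∂sphereMeasure)
      = g θ := rfl
    _ ≤ ∫ p, K p ∂μp := hmono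
    _ = 2 / s ^ 2 * ∫ p, F1 p * F2 p ∂μp := hKval
    _ ≤ 2 / s ^ 2 * ((∫ p, F1 p ^ (2:ℝ) ∂μp) ^ ((1:ℝ)/2)
          * (∫ p, F2 p ^ (2:ℝ) ∂μp) ^ ((1:ℝ)/2)) := by
        apply mul_le_mul_of_nonneg_left _ (by positivity)
        convert hHolder using 3 <;> norm_num
    _ = _ := by
        rw [hA, hB, ← Real.sqrt_eq_rpow, ← Real.sqrt_eq_rpow]
        ring
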